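/- arXiv:2203.16426 — 4 statements merged into one kernel-verified Lean document; each statement's English description precedes it below -/
import Mathlib

section
/- Let A, B, C : ℝ → ℝ satisfy the adjoint equations A' = B, B' = -A + u·C, C' = -u·B on an interval [a,b). If A(s) = 0 for all s in [a,b) and the Hamiltonian condition 1 + C(s) + u(s)·A(s) = 0 holds on [a,b), then u(s) = 0 for all s in the interior of [a,b). -/
theorem stmt_3 (A B C u : ℝ → ℝ) (a b : ℝ) (hab : a < b)
    (hA : Differentiable ℝ A) (hB : Differentiable ℝ B) (hC : Differentiable ℝ C)
    (hu : Continuous u)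
    (hA' : ∀ s ∈ Set.Ico a b, deriv A s = B s)
    (hB' : ∀ s ∈ Set.Ico a b, deriv B s = -A s + u s * C s)
    (hC' : ∀ s ∈ Set.Ico a b, deriv C s = -(u s * B s))
    (hA0 : ∀ s ∈ Set.Ico a b, A s = 0)
    (hH : ∀ s ∈ Set.Ico a b, 1 + C s + u s * A s = 0) :
    ∀ s ∈ Set.Ioo a b, u s = 0 := by
  -- B = 0 on Ioo a b
  have hB0 : ∀ s ∈ Set.Ioo a b, B s = 0 := by
    intro s hs
    have hnhds : Set.Ioo a b ∈ nhds s := isOpen_Ioo.mem_nhds hs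
    have hAeq : A =ᶠ[nhds s] (fun _ => (0:ℝ)) :=
      Filter.eventuallyEq_of_mem hnhds (fun x hx => hA0 x (Set.Ioo_subset_Ico_self hx))
    have : deriv A s = deriv (fun _ => (0:ℝ)) s := hAeq.deriv_eq
    rw [deriv_const] at this
    rw [← hA' s (Set.Ioo_subset_Ico_self hs)]
    exact this
  intro s hs
  have hnhds : Set.Ioo a b ∈ nhds s := isOpen_Ioo.mem_nhds hs
  have hBeq : B =ᶠ[nhds s] (fun _ => (0:ℝ)) :=
    Filter.eventuallyEq_of_mem hnhds (fun x hx => hB0 x hx)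
  have hdB : deriv B s = 0 := by
    have := hBeq.deriv_eq
    rwa [deriv_const] at this
  have hsI : s ∈ Set.Ico a b := Set.Ioo_subset_Ico_self hs
  have h1 := hB' s hsI
  rw [hdB, hA0 s hsI] at h1
  have h2 := hH s hsI
  rw [hA0 s hsI] at h2
  have hC1 : C s = -1 := by linarith [h2, mul_zero (u s)]
  have : u s * C s = 0 := by linarith [h1]
  rw [hC1] at this
  linarith
end

section
/- Let r ∈ (0,1), k_x = √(1-r²), k_z = r, and let Ω_L, Ω_R, u_L, u_R, e₂ be as in the appendix (so Ω_L·u_L = Ω_R·u_R = 0, Ω_L·u_R = -2k_x k_z e₂, Ω_R·u_L = 2k_x k_z e₂, Ω³ = -Ω for Ω ∈ {Ω_L, Ω_R}). Define R_L(θ) = exp(Ω_L θ), R_R(θ) = exp(Ω_R θ). Then for any φ ∈ ℝ: u_Rᵀ·Ω_L·R_R(π+φ)·u_L = -4 r² (1-r²) sin φ. -/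
open Matrix Real

section Rodrigues

variable {Ω : Matrix (Fin 3) (Fin 3) ℝ}

lemma aux_pow4 (h : Ω ^ 3 = -Ω) : Ω ^ 4 = -(Ω ^ 2) := by
  have : Ω ^ 4 = Ω ^ 3 * Ω := by rw [← pow_succ]
  rw [this, h, neg_mul, ← sq]

lemma pow_two_mul_add_two (h : Ω ^ 3 = -Ω) (n : ℕ) :
    Ω ^ (2 * n + 2) = ((-1 : ℝ) ^ n) • Ω ^ 2 := by
  induction n with
  | zero => simp
  | succ n ih =>
      have e : 2 * (n + 1) + 2 = (2 * n + 2) + 2 := by ring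
      rw [e, pow_add, ih, smul_mul_assoc, ← pow_add, show (2 + 2 : ℕ) = 4 from rfl,
        aux_pow4 h, smul_neg]
      simp [pow_succ]

lemma pow_two_mul_add_one (h : Ω ^ 3 = -Ω) (n : ℕ) :
    Ω ^ (2 * n + 1) = ((-1 : ℝ) ^ n) • Ω := by
  induction n with
  | zero => simp
  | succ n ih =>
      have e : 2 * (n + 1) + 1 = (2 * n + 1) + 2 := by ring
      have h' : Ω ^ (2 + 1) = -Ω := h
      rw [e, pow_add, ih, smul_mul_assoc, ← pow_succ', h', smul_neg]
      simp [pow_succ]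

lemma rodrigues (h : Ω ^ 3 = -Ω) (θ : ℝ) :
    NormedSpace.exp (θ • Ω)
      = 1 + Real.sin θ • Ω + (1 - Real.cos θ) • Ω ^ 2 := by
  rw [NormedSpace.exp_eq_tsum (𝕂 := ℝ)]
  show (∑' n : ℕ, ((Nat.factorial n : ℝ))⁻¹ • (θ • Ω) ^ n) = _
  set g : ℕ → ℝ := fun n => (-1 : ℝ) ^ n * θ ^ (2 * n) / (Nat.factorial (2 * n) : ℝ) with hg
  set F : ℕ → Matrix (Fin 3) (Fin 3) ℝ :=
    fun n => ((Nat.factorial n : ℝ))⁻¹ • (θ • Ω) ^ n with hF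
  have heven : HasSum (fun n : ℕ => F (2 * n)) (1 + (1 - Real.cos θ) • Ω ^ 2) := by
    have hc : HasSum g (Real.cos θ) := Real.hasSum_cos θ
    have h1 : HasSum (fun n => -(g (n + 1))) (1 - Real.cos θ) := by
      have := ((hasSum_nat_add_iff' (f := g) 1).2 hc).neg
      simpa [hg] using this
    have h2 : HasSum (fun n => (-(g (n + 1))) • Ω ^ 2) ((1 - Real.cos θ) • Ω ^ 2) :=
      h1.smul_const _
    have h3 : HasSum (fun n => F (2 * (n + 1))) ((1 - Real.cos θ) • Ω ^ 2) := by
      refine h2.congr_fun fun n => ?_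
      rw [hF, hg]
      simp only [smul_pow]
      rw [show 2 * (n + 1) = 2 * n + 2 from by ring, pow_two_mul_add_two h n,
        smul_smul, smul_smul]
      congr 1
      have hne : ((Nat.factorial (2 * n + 2)) : ℝ) ≠ 0 := by
        exact_mod_cast (Nat.factorial_pos _).ne'
      field_simp
      ring
    have h4 : HasSum (fun n => F (2 * n)) ((1 - Real.cos θ) • Ω ^ 2 + ∑ i ∈ Finset.range 1, F (2 * i)) :=
      (hasSum_nat_add_iff (f := fun n => F (2 * n)) 1).1 (by simpa using h3)
    have hF0 : F 0 = 1 := by simp [hF]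
    rw [Finset.sum_range_one, hF0] at h4
    convert h4 using 1
    abel
  have hodd : HasSum (fun n : ℕ => F (2 * n + 1)) (Real.sin θ • Ω) := by
    have hs := (Real.hasSum_sin θ).smul_const Ω
    refine hs.congr_fun fun n => ?_
    rw [hF]
    simp only [smul_pow]
    rw [pow_two_mul_add_one h n, smul_smul, smul_smul]
    congr 1
    have hne : ((Nat.factorial (2 * n + 1)) : ℝ) ≠ 0 := by
      exact_mod_cast (Nat.factorial_pos _).ne'
    field_simp
  have := (heven.even_add_odd hodd).tsum_eq
  rw [this]
  abel

end Rodrigues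

theorem stmt_11 (r : ℝ) (hr : r ∈ Set.Ioo (0:ℝ) 1) (φ : ℝ) :
    let kx : ℝ := Real.sqrt (1 - r ^ 2)
    let ΩL : Matrix (Fin 3) (Fin 3) ℝ := !![0, r, 0; -r, 0, kx; 0, -kx, 0]
    let ΩR : Matrix (Fin 3) (Fin 3) ℝ := !![0, r, 0; -r, 0, -kx; 0, kx, 0]
    let uL : Fin 3 → ℝ := ![kx, 0, r]
    let uR : Fin 3 → ℝ := ![-kx, 0, r]
    let RL : ℝ → Matrix (Fin 3) (Fin 3) ℝ := fun θ => NormedSpace.exp (θ • ΩL)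
    let RR : ℝ → Matrix (Fin 3) (Fin 3) ℝ := fun θ => NormedSpace.exp (θ • ΩR)
    uR ⬝ᵥ (ΩL * RR (π + φ)).mulVec uL = -(4 * r ^ 2 * (1 - r ^ 2)) * Real.sin φ := by
  intro kx ΩL ΩR uL uR RL RR
  obtain ⟨hr0, hr1⟩ := hr
  have hkx2 : kx ^ 2 = 1 - r ^ 2 := Real.sq_sqrt (by nlinarith)
  have hkk : kx * kx = 1 - r ^ 2 := by rw [← sq]; exact hkx2
  have h3 : ΩR ^ 3 = -ΩR := by
    have e : ΩR ^ 3 = ΩR * ΩR * ΩR := by rw [pow_succ, sq]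
    rw [e]
    show (!![0, r, 0; -r, 0, -kx; 0, kx, 0] * !![0, r, 0; -r, 0, -kx; 0, kx, 0] *
      !![0, r, 0; -r, 0, -kx; 0, kx, 0] : Matrix (Fin 3) (Fin 3) ℝ) = _
    ext i j
    fin_cases i <;> fin_cases j <;>
      simp [ΩR, Matrix.mul_apply, Fin.sum_univ_three, Matrix.neg_apply] <;>
      first
        | linear_combination kx * hkk
        | linear_combination (-kx) * hkk
        | linear_combination r * hkk
        | linear_combination (-r) * hkk
        | linear_combination hkk
        | ring
  have hRR : RR (π + φ) = 1 + Real.sin (π + φ) • ΩR + (1 - Real.cos (π + φ)) • ΩR ^ 2 :=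
    rodrigues h3 (π + φ)
  show uR ⬝ᵥ (ΩL * RR (π + φ)).mulVec uL = _
  rw [hRR]
  have hs : Real.sin (π + φ) = -Real.sin φ := by simp [Real.sin_add]
  have hc : Real.cos (π + φ) = -Real.cos φ := by simp [Real.cos_add]
  rw [hs, hc, sq]
  simp only [Matrix.mulVec, Matrix.mul_apply, dotProduct, Fin.sum_univ_three]
  simp [ΩL, ΩR, uL, uR, Matrix.one_apply, Fin.sum_univ_three]
  linear_combination (-4 * r ^ 2 * Real.sin φ) * hkx2
end

section
/- With the setup of the appendix, for every φ ∈ ℝ: u_Rᵀ·Ω_L·R_R(π+φ)·R_L(π+φ)·u_R = 4 r² (1-r²) sin φ · (1 - 2r²(1 + cos φ)), and u_Rᵀ·R_L(π+φ)·Ω_L·u_R = 4 r² (1-r²) sin φ. -/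
open Matrix Real

theorem rodrigues3 (Ω : Matrix (Fin 3) (Fin 3) ℝ) (h : Ω * Ω * Ω = -Ω) (θ : ℝ) :
    NormedSpace.exp (θ • Ω) = 1 + Real.sin θ • Ω + (1 - Real.cos θ) • (Ω * Ω) := by
  letI : SeminormedRing (Matrix (Fin 3) (Fin 3) ℝ) := Matrix.linftyOpSemiNormedRing
  letI : NormedRing (Matrix (Fin 3) (Fin 3) ℝ) := Matrix.linftyOpNormedRing
  letI : NormedAlgebra ℝ (Matrix (Fin 3) (Fin 3) ℝ) := Matrix.linftyOpNormedAlgebra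
  set R : ℝ → Matrix (Fin 3) (Fin 3) ℝ :=
    fun t => 1 + Real.sin t • Ω + (1 - Real.cos t) • (Ω * Ω) with hRdef
  set f : ℝ → Matrix (Fin 3) (Fin 3) ℝ :=
    fun t => NormedSpace.exp (t • (-Ω)) * R t with hfdef
  have hR : ∀ t, HasDerivAt R (Real.cos t • Ω + Real.sin t • (Ω * Ω)) t := by
    intro t
    have h1 : HasDerivAt (fun t : ℝ => Real.sin t • Ω) (Real.cos t • Ω) t :=
      (Real.hasDerivAt_sin t).smul_const Ω
    have h2 : HasDerivAt (fun t : ℝ => (1 - Real.cos t) • (Ω * Ω)) (Real.sin t • (Ω * Ω)) t := by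
      have := ((Real.hasDerivAt_cos t).const_sub 1).smul_const (Ω * Ω)
      simp only [neg_neg] at this
      exact this
    have h3 := ((hasDerivAt_const t (1 : Matrix (Fin 3) (Fin 3) ℝ)).add h1).add h2
    rw [zero_add] at h3
    exact h3
  have hΩ3' : Ω * (Ω * Ω) = -Ω := by rw [← mul_assoc]; exact h
  have hf : ∀ t, HasDerivAt f 0 t := by
    intro t
    have h1 : HasDerivAt (fun u : ℝ => NormedSpace.exp (u • (-Ω)))
        (NormedSpace.exp (t • (-Ω)) * (-Ω)) t :=
      hasDerivAt_exp_smul_const (-Ω) t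
    have h2 := h1.mul (hR t)
    have hzero : (-Ω) * R t + (Real.cos t • Ω + Real.sin t • (Ω * Ω)) = 0 := by
      have e1 : (-Ω) * (Ω * Ω) = Ω := by rw [neg_mul, hΩ3', neg_neg]
      have e2 : (-Ω) * Ω = -(Ω * Ω) := by rw [neg_mul]
      simp only [hRdef]
      rw [mul_add, mul_add, mul_one, mul_smul_comm, mul_smul_comm, e1, e2]
      module
    have key : NormedSpace.exp (t • (-Ω)) * (-Ω) * R t
        + NormedSpace.exp (t • (-Ω)) * (Real.cos t • Ω + Real.sin t • (Ω * Ω)) = 0 := by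
      rw [mul_assoc, ← mul_add, hzero, mul_zero]
    rw [← key]
    exact h2
  have hconst : ∀ t, f t = f 0 := by
    intro t
    have hdiff : Differentiable ℝ f := fun x => (hf x).differentiableAt
    have hderiv : ∀ x, deriv f x = 0 := fun x => (hf x).deriv
    exact is_const_of_deriv_eq_zero hdiff hderiv t 0
  have hf0 : f 0 = 1 := by
    simp [hfdef, hRdef, NormedSpace.exp_zero]
  have hfθ : NormedSpace.exp (θ • (-Ω)) * R θ = 1 := by
    have h' := hconst θ
    rw [hf0] at h'
    simpa [hfdef] using h'
  have hinv : NormedSpace.exp (θ • Ω) * NormedSpace.exp (θ • (-Ω)) = 1 := by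
    letI : NormedAlgebra ℚ (Matrix (Fin 3) (Fin 3) ℝ) := NormedAlgebra.restrictScalars ℚ ℝ _
    erw [← NormedSpace.exp_add_of_commute]
    · simp [NormedSpace.exp_zero]
    · simpa using (Commute.refl Ω).smul_left θ |>.smul_right θ |>.neg_right
  have final : NormedSpace.exp (θ • Ω) = R θ := by
    calc NormedSpace.exp (θ • Ω)
        = NormedSpace.exp (θ • Ω) * 1 := by rw [mul_one]
      _ = NormedSpace.exp (θ • Ω) * (NormedSpace.exp (θ • (-Ω)) * R θ) := by rw [hfθ]
      _ = (NormedSpace.exp (θ • Ω) * NormedSpace.exp (θ • (-Ω))) * R θ := by rw [mul_assoc]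
      _ = R θ := by rw [hinv, one_mul]
  rw [final]

set_option maxHeartbeats 2000000 in
set_option maxRecDepth 100000 in
theorem stmt_14 (r : ℝ) (hr : r ∈ Set.Ioo (0:ℝ) 1) (φ : ℝ) :
    let kx : ℝ := Real.sqrt (1 - r ^ 2)
    let ΩL : Matrix (Fin 3) (Fin 3) ℝ := !![0, r, 0; -r, 0, kx; 0, -kx, 0]
    let ΩR : Matrix (Fin 3) (Fin 3) ℝ := !![0, r, 0; -r, 0, -kx; 0, kx, 0]
    let uL : Fin 3 → ℝ := ![kx, 0, r]
    let uR : Fin 3 → ℝ := ![-kx, 0, r]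
    let RL : ℝ → Matrix (Fin 3) (Fin 3) ℝ := fun θ => NormedSpace.exp (θ • ΩL)
    let RR : ℝ → Matrix (Fin 3) (Fin 3) ℝ := fun θ => NormedSpace.exp (θ • ΩR)
    uR ⬝ᵥ (ΩL * RR (π + φ) * RL (π + φ)).mulVec uR
      = 4 * r ^ 2 * (1 - r ^ 2) * Real.sin φ * (1 - 2 * r ^ 2 * (1 + Real.cos φ)) ∧
    uR ⬝ᵥ (RL (π + φ) * ΩL).mulVec uR = 4 * r ^ 2 * (1 - r ^ 2) * Real.sin φ := by
  intro kx ΩL ΩR uL uR RL RR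
  have hkx : kx ^ 2 = 1 - r ^ 2 := Real.sq_sqrt (by nlinarith [hr.1, hr.2] : (0:ℝ) ≤ 1 - r ^ 2)
  have hL3 : ΩL * ΩL * ΩL = -ΩL := by
    ext i j
    fin_cases i <;> fin_cases j <;>
      simp [ΩL, Matrix.mul_apply, Fin.sum_univ_succ] <;>
      (first
        | linear_combination r * hkx
        | linear_combination (-r) * hkx
        | linear_combination kx * hkx
        | linear_combination (-kx) * hkx
        | linear_combination hkx
        | linear_combination (-1 : ℝ) * hkx
        | ring)
  have hR3 : ΩR * ΩR * ΩR = -ΩR := by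
    ext i j
    fin_cases i <;> fin_cases j <;>
      simp [ΩR, Matrix.mul_apply, Fin.sum_univ_succ] <;>
      (first
        | linear_combination r * hkx
        | linear_combination (-r) * hkx
        | linear_combination kx * hkx
        | linear_combination (-kx) * hkx
        | linear_combination hkx
        | linear_combination (-1 : ℝ) * hkx
        | ring)
  have hRL : RL (π + φ) = 1 + Real.sin (π + φ) • ΩL + (1 - Real.cos (π + φ)) • (ΩL * ΩL) :=
    rodrigues3 ΩL hL3 (π + φ)
  have hRR : RR (π + φ) = 1 + Real.sin (π + φ) • ΩR + (1 - Real.cos (π + φ)) • (ΩR * ΩR) :=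
    rodrigues3 ΩR hR3 (π + φ)
  rw [hRL, hRR]
  have hs : Real.sin (π + φ) = -Real.sin φ := by simp [Real.sin_add]
  have hc : Real.cos (π + φ) = -Real.cos φ := by simp [Real.cos_add]
  rw [hs, hc]
  have eL : (1 : Matrix (Fin 3) (Fin 3) ℝ) + -Real.sin φ • ΩL + (1 - -Real.cos φ) • (ΩL * ΩL)
      = !![1 - r^2 - r^2*Real.cos φ, -(r*Real.sin φ), kx*r + kx*r*Real.cos φ;
           r*Real.sin φ, 1 - r^2 - r^2*Real.cos φ - kx^2 - kx^2*Real.cos φ, -(kx*Real.sin φ);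
           kx*r + kx*r*Real.cos φ, kx*Real.sin φ, 1 - kx^2 - kx^2*Real.cos φ] := by
    ext i j
    fin_cases i <;> fin_cases j <;>
      simp [ΩL, Matrix.mul_apply, Fin.sum_univ_succ, Matrix.one_apply] <;> ring
  have eR : (1 : Matrix (Fin 3) (Fin 3) ℝ) + -Real.sin φ • ΩR + (1 - -Real.cos φ) • (ΩR * ΩR)
      = !![1 - r^2 - r^2*Real.cos φ, -(r*Real.sin φ), -(kx*r) - kx*r*Real.cos φ;
           r*Real.sin φ, 1 - r^2 - r^2*Real.cos φ - kx^2 - kx^2*Real.cos φ, kx*Real.sin φ;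
           -(kx*r) - kx*r*Real.cos φ, -(kx*Real.sin φ), 1 - kx^2 - kx^2*Real.cos φ] := by
    ext i j
    fin_cases i <;> fin_cases j <;>
      simp [ΩR, Matrix.mul_apply, Fin.sum_univ_succ, Matrix.one_apply] <;> ring
  rw [eL, eR]
  constructor
  · simp [ΩL, uR, Matrix.mul_apply, Matrix.mulVec, dotProduct, Fin.sum_univ_succ]
    linear_combination (4 * r ^ 2 * Real.sin φ - 8 * r ^ 4 * Real.sin φ
      - 8 * r ^ 4 * Real.sin φ * Real.cos φ) * hkx
  · simp [ΩL, uR, Matrix.mul_apply, Matrix.mulVec, dotProduct, Fin.sum_univ_succ]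
    linear_combination (4 * r ^ 2 * Real.sin φ) * hkx
end

section
/- With the setup of the appendix, for every φ ∈ ℝ: u_Rᵀ·Ω_L²·R_R(π+φ)·R_L(π+φ)·u_L = 4 r² (1-r²)(1-2r²)(1 + cos φ). -/
open Matrix Real

attribute [local instance] Matrix.linftyOpSemiNormedRing Matrix.linftyOpNormedRing
  Matrix.linftyOpNormedAlgebra

open NormedSpace in
theorem rodrigues_aux (Ω : Matrix (Fin 3) (Fin 3) ℝ) (h3 : Ω * Ω * Ω = -Ω) (θ : ℝ) :
    exp (θ • Ω) = 1 + Real.sin θ • Ω + (1 - Real.cos θ) • (Ω * Ω) := by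
  set G : ℝ → Matrix (Fin 3) (Fin 3) ℝ :=
    fun t => 1 + Real.sin t • Ω + (1 - Real.cos t) • (Ω * Ω) with hG
  have hd : ∀ t : ℝ, HasDerivAt (fun t => NormedSpace.exp (t • (-Ω)) * G t) 0 t := by
    intro t
    have h1 : HasDerivAt (fun t : ℝ => exp (t • (-Ω))) (exp (t • (-Ω)) * (-Ω)) t :=
      hasDerivAt_exp_smul_const (-Ω) t
    have h2 : HasDerivAt G (Real.cos t • Ω + Real.sin t • (Ω * Ω)) t := by
      have hs : HasDerivAt (fun t : ℝ => Real.sin t • Ω) (Real.cos t • Ω) t :=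
        (Real.hasDerivAt_sin t).smul_const Ω
      have hc : HasDerivAt (fun t : ℝ => (1 - Real.cos t) • (Ω * Ω))
          (Real.sin t • (Ω * Ω)) t := by
        have := ((hasDerivAt_const t (1:ℝ)).sub (Real.hasDerivAt_cos t)).smul_const (Ω * Ω)
        simp at this; exact this
      have := ((hasDerivAt_const t (1 : Matrix (Fin 3) (Fin 3) ℝ)).add hs).add hc
      simp at this; exact this
    have hmul := h1.mul h2
    refine hmul.congr_deriv ?_
    have hΩ3 : Ω * (Ω * Ω) = -Ω := by rw [← mul_assoc, h3]
    have hz : (-Ω) * G t + (Real.cos t • Ω + Real.sin t • (Ω * Ω)) = 0 := by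
      simp only [hG, mul_add, mul_one, neg_mul, mul_smul_comm, hΩ3, smul_neg]
      module
    rw [mul_assoc, ← mul_add, hz, mul_zero]
  have hdiff : Differentiable ℝ (fun t => NormedSpace.exp (t • (-Ω)) * G t) :=
    fun t => (hd t).differentiableAt
  have hconst := is_const_of_deriv_eq_zero hdiff (fun t => (hd t).deriv) θ 0
  have h0 : exp ((0:ℝ) • (-Ω)) * G 0 = 1 := by
    simp [hG, NormedSpace.exp_zero]
  have hθ : exp (θ • (-Ω)) * G θ = 1 := by rw [hconst, h0]
  have hcomm : Commute (θ • Ω) (θ • (-Ω)) := by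
    simp only [smul_neg]
    exact (Commute.refl (θ • Ω)).neg_right
  have hinv : exp (θ • Ω) * exp (θ • (-Ω)) = 1 := by
    refine (exp_add_of_commute hcomm).symm.trans ?_
    simp [NormedSpace.exp_zero]
  calc exp (θ • Ω) = exp (θ • Ω) * (exp (θ • (-Ω)) * G θ) := by rw [hθ, mul_one]
    _ = (exp (θ • Ω) * exp (θ • (-Ω))) * G θ := by rw [mul_assoc]
    _ = G θ := by rw [hinv, one_mul]

theorem stmt_15 (r : ℝ) (hr : r ∈ Set.Ioo (0:ℝ) 1) (φ : ℝ) :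
    let kx : ℝ := Real.sqrt (1 - r ^ 2)
    let ΩL : Matrix (Fin 3) (Fin 3) ℝ := !![0, r, 0; -r, 0, kx; 0, -kx, 0]
    let ΩR : Matrix (Fin 3) (Fin 3) ℝ := !![0, r, 0; -r, 0, -kx; 0, kx, 0]
    let uL : Fin 3 → ℝ := ![kx, 0, r]
    let uR : Fin 3 → ℝ := ![-kx, 0, r]
    let RL : ℝ → Matrix (Fin 3) (Fin 3) ℝ := fun θ => NormedSpace.exp (θ • ΩL)
    let RR : ℝ → Matrix (Fin 3) (Fin 3) ℝ := fun θ => NormedSpace.exp (θ • ΩR)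
    uR ⬝ᵥ (ΩL * ΩL * RR (π + φ) * RL (π + φ)).mulVec uL
      = 4 * r ^ 2 * (1 - r ^ 2) * (1 - 2 * r ^ 2) * (1 + Real.cos φ) := by
  intro kx ΩL ΩR uL uR RL RR
  obtain ⟨hr0, hr1⟩ := hr
  have hk : kx ^ 2 = 1 - r ^ 2 := Real.sq_sqrt (by nlinarith)
  have h3L : ΩL * ΩL * ΩL = -ΩL := by
    ext i j
    fin_cases i <;> fin_cases j <;>
      simp [ΩL, Matrix.mul_apply, Fin.sum_univ_three] <;>
      first
        | linear_combination kx * hk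
        | linear_combination (-kx) * hk
        | linear_combination r * hk
        | linear_combination (-r) * hk
  have h3R : ΩR * ΩR * ΩR = -ΩR := by
    ext i j
    fin_cases i <;> fin_cases j <;>
      simp [ΩR, Matrix.mul_apply, Fin.sum_univ_three] <;>
      first
        | linear_combination kx * hk
        | linear_combination (-kx) * hk
        | linear_combination r * hk
        | linear_combination (-r) * hk
  have hRL := rodrigues_aux ΩL h3L (π + φ)
  have hRR := rodrigues_aux ΩR h3R (π + φ)
  show uR ⬝ᵥ (ΩL * ΩL * NormedSpace.exp ((π + φ) • ΩR) *
      NormedSpace.exp ((π + φ) • ΩL)).mulVec uL = _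
  rw [hRL, hRR]
  simp only [Real.sin_add, Real.cos_add, Real.sin_pi, Real.cos_pi]
  simp [ΩL, ΩR, uL, uR, Matrix.mul_apply, Matrix.mulVec, Matrix.vecMul, dotProduct,
    Fin.sum_univ_three, Matrix.one_fin_three, Matrix.smul_apply, Matrix.add_apply]
  linear_combination (4 * r ^ 2 * (1 + Real.cos φ) * (kx ^ 2 + 1 - 2 * r ^ 2)) * hk
end
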